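/- Let h ≥ 2 and p ≥ q ≥ 1 be integers. Then the sum S₁ = Σ_{r=1}^{h−2} p^(h−r) · q^(r+1) · (1/(r+1)) · C(h,r) · C(h−1,r) satisfies S₁ ≤ p^(h−1) · q² · (1/h) · C(2h, h+1). -/

import Mathlib

open Finset

lemma stmt4_key (h : ℕ) :
    ∑ r ∈ Finset.Icc 1 (h - 2), h.choose r * h.choose (r + 1) ≤ (2 * h).choose (h + 1) := by
  calc ∑ r ∈ Finset.Icc 1 (h - 2), h.choose r * h.choose (r + 1)
      = ∑ r ∈ Finset.Icc 1 (h - 2), h.choose (h - r) * h.choose (r + 1) := by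
        refine Finset.sum_congr rfl fun r hr => ?_
        simp only [Finset.mem_Icc] at hr
        rw [Nat.choose_symm (by omega)]
    _ = ∑ ij ∈ (Finset.Icc 1 (h - 2)).image (fun r => (h - r, r + 1)),
          h.choose ij.1 * h.choose ij.2 := by
        rw [Finset.sum_image]
        intro a _ b _ hab
        have := congrArg Prod.snd hab
        simpa using this
    _ ≤ ∑ ij ∈ Finset.HasAntidiagonal.antidiagonal (h + 1), h.choose ij.1 * h.choose ij.2 := by
        apply Finset.sum_le_sum_of_subset
        intro ij hij
        simp only [Finset.mem_image, Finset.mem_Icc] at hij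
        obtain ⟨r, ⟨hr1, hr2⟩, rfl⟩ := hij
        simp only [Finset.HasAntidiagonal.mem_antidiagonal]
        omega
    _ = (h + h).choose (h + 1) := (Nat.add_choose_eq h h (h + 1)).symm
    _ = (2 * h).choose (h + 1) := by rw [two_mul]

theorem stmt_4 (p q h : ℕ) (hq : 1 ≤ q) (hpq : q ≤ p) (hh : 2 ≤ h) :
    ∑ r ∈ Finset.Icc 1 (h - 2),
        (p : ℝ) ^ (h - r) * (q : ℝ) ^ (r + 1) * (1 / (r + 1 : ℝ)) *
          (h.choose r : ℝ) * ((h - 1).choose r : ℝ)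
      ≤ (p : ℝ) ^ (h - 1) * (q : ℝ) ^ 2 * (1 / (h : ℝ)) * ((2 * h).choose (h + 1) : ℝ) := by
  have hp : 1 ≤ p := hq.trans hpq
  have hppos : (0:ℝ) < p := by exact_mod_cast hp
  have hqpos : (0:ℝ) < q := by exact_mod_cast hq
  have hhpos : (0:ℝ) < h := by exact_mod_cast (by omega : 0 < h)
  calc ∑ r ∈ Finset.Icc 1 (h - 2),
        (p : ℝ) ^ (h - r) * (q : ℝ) ^ (r + 1) * (1 / (r + 1 : ℝ)) *
          (h.choose r : ℝ) * ((h - 1).choose r : ℝ)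
      ≤ ∑ r ∈ Finset.Icc 1 (h - 2),
        (p : ℝ) ^ (h - 1) * (q : ℝ) ^ 2 * (1 / (h : ℝ)) *
          ((h.choose r * h.choose (r + 1) : ℕ) : ℝ) := by
        apply Finset.sum_le_sum
        intro r hr
        simp only [Finset.mem_Icc] at hr
        obtain ⟨hr1, hr2⟩ := hr
        have hid : ((r : ℝ) + 1) * (h.choose (r + 1) : ℝ) = (h : ℝ) * ((h - 1).choose r : ℝ) := by
          have := Nat.add_one_mul_choose_eq (h - 1) r
          have hs : h - 1 + 1 = h := by omega
          rw [hs] at this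
          have hc : (h : ℝ) * ((h - 1).choose r : ℝ) = (h.choose (r + 1) : ℝ) * ((r : ℝ) + 1) := by
            exact_mod_cast this
          linarith [hc]
        have hchoose : (1 / ((r : ℝ) + 1)) * ((h - 1).choose r : ℝ)
            = (1 / (h : ℝ)) * (h.choose (r + 1) : ℝ) := by
          field_simp
          linarith [hid]
        have hpow : (p : ℝ) ^ (h - r) * (q : ℝ) ^ (r + 1) ≤ (p : ℝ) ^ (h - 1) * (q : ℝ) ^ 2 := by
          have h1 : (q : ℝ) ^ (r - 1) ≤ (p : ℝ) ^ (r - 1) :=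
            pow_le_pow_left₀ hqpos.le (by exact_mod_cast hpq) _
          have e1 : (q : ℝ) ^ (r + 1) = (q : ℝ) ^ (r - 1) * (q : ℝ) ^ 2 := by
            rw [← pow_add]; congr 1; omega
          have e2 : (p : ℝ) ^ (h - 1) = (p : ℝ) ^ (h - r) * (p : ℝ) ^ (r - 1) := by
            rw [← pow_add]; congr 1; omega
          rw [e1, e2]
          have : (p : ℝ) ^ (h - r) * ((q : ℝ) ^ (r - 1) * (q : ℝ) ^ 2)
              ≤ (p : ℝ) ^ (h - r) * ((p : ℝ) ^ (r - 1) * (q : ℝ) ^ 2) := by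
            apply mul_le_mul_of_nonneg_left _ (by positivity)
            exact mul_le_mul_of_nonneg_right h1 (by positivity)
          linarith [this]
        have hnn : (0:ℝ) ≤ (h.choose r : ℝ) := by positivity
        calc (p : ℝ) ^ (h - r) * (q : ℝ) ^ (r + 1) * (1 / (r + 1 : ℝ)) *
              (h.choose r : ℝ) * ((h - 1).choose r : ℝ)
            = (p : ℝ) ^ (h - r) * (q : ℝ) ^ (r + 1) * (h.choose r : ℝ) *
              ((1 / ((r : ℝ) + 1)) * ((h - 1).choose r : ℝ)) := by push_cast; ring
          _ = (p : ℝ) ^ (h - r) * (q : ℝ) ^ (r + 1) * (h.choose r : ℝ) *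
              ((1 / (h : ℝ)) * (h.choose (r + 1) : ℝ)) := by rw [hchoose]
          _ ≤ (p : ℝ) ^ (h - 1) * (q : ℝ) ^ 2 * (h.choose r : ℝ) *
              ((1 / (h : ℝ)) * (h.choose (r + 1) : ℝ)) := by
              apply mul_le_mul_of_nonneg_right _ (by positivity)
              exact mul_le_mul_of_nonneg_right hpow hnn
          _ = (p : ℝ) ^ (h - 1) * (q : ℝ) ^ 2 * (1 / (h : ℝ)) *
              ((h.choose r * h.choose (r + 1) : ℕ) : ℝ) := by push_cast; ring
    _ = (p : ℝ) ^ (h - 1) * (q : ℝ) ^ 2 * (1 / (h : ℝ)) *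
          ((∑ r ∈ Finset.Icc 1 (h - 2), h.choose r * h.choose (r + 1) : ℕ) : ℝ) := by
        rw [← Finset.mul_sum]; push_cast; ring
    _ ≤ (p : ℝ) ^ (h - 1) * (q : ℝ) ^ 2 * (1 / (h : ℝ)) * ((2 * h).choose (h + 1) : ℝ) := by
        apply mul_le_mul_of_nonneg_left _ (by positivity)
        exact_mod_cast stmt4_key h
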